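/- Let K be a field of characteristic zero and n ≥ 4. For arbitrary scalars λ_1,…,λ_{n−1}, c_1,…,c_{n−1} ∈ K, the K-linear map D : T(n) → T(n) defined on the standard basis by D(N_{12}) = λ_1 N_{12} + c_1 N_{2n}, D(N_{j(j+1)}) = λ_j N_{j(j+1)} + c_j N_{1n} for 2 ≤ j ≤ n−2, D(N_{(n−1)n}) = λ_{n−1} N_{(n−1)n} + c_{n−1} N_{1(n−1)}, and D(N_{ik}) = (Σ_{p=i}^{k−1} λ_p) N_{ik} for k − i ≥ 2, is a derivation of the Lie algebra T(n). (All the parameters in the canonical form of a structure matrix are free.) -/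

import Mathlib

open Matrix

attribute [local instance 100] LieRing.ofAssociativeRing

/-- The Lie algebra `T(n)` of strictly upper triangular `n × n` matrices over `K`. -/
def strictUpper (n : ℕ) (K : Type*) [Field K] :
    LieSubalgebra K (Matrix (Fin n) (Fin n) K) where
  carrier := {M | ∀ i j : Fin n, j ≤ i → M i j = 0}
  add_mem' := by
    intro a b ha hb i j hij
    simp [Matrix.add_apply, ha i j hij, hb i j hij]
  zero_mem' := by intro i j hij; simp
  smul_mem' := by
    intro c a ha i j hij
    simp [Matrix.smul_apply, ha i j hij]
  lie_mem' := by
    intro a b ha hb i j hij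
    have hmul : ∀ x y : Matrix (Fin n) (Fin n) K,
        (∀ i j : Fin n, j ≤ i → x i j = 0) → (∀ i j : Fin n, j ≤ i → y i j = 0) →
        (x * y) i j = 0 := by
      intro x y hx hy
      rw [Matrix.mul_apply]
      apply Finset.sum_eq_zero
      intro s _
      rcases le_or_gt s i with h | h
      · rw [hx i s h, zero_mul]
      · rw [hy s j (hij.trans h.le), mul_zero]
    rw [Ring.lie_def, Matrix.sub_apply, hmul a b ha hb, hmul b a hb ha, sub_zero]

/-- The standard basis element `N_{ik}` (with `i < k`) of `T(n)`. -/
def stdN {n : ℕ} {K : Type*} [Field K] {i k : Fin n} (h : i < k) :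
    strictUpper n K :=
  ⟨Matrix.single i k 1, by
    intro a b hba
    simp only [Matrix.single, Matrix.of_apply, ite_eq_right_iff, one_ne_zero]
    rintro ⟨rfl, rfl⟩
    exact absurd h (not_lt.mpr hba)⟩

/-- The basis element `N_{ik}` of `T(n)`, indexed by natural numbers (`0`-based). -/
def natN (n : ℕ) (K : Type*) [Field K] (i k : ℕ) (h1 : i < k) (h2 : k < n) :
    strictUpper n K :=
  stdN (i := ⟨i, h1.trans h2⟩) (k := ⟨k, h2⟩) (Fin.mk_lt_mk.mpr h1)

section CanonAux

open Finset

variable {K : Type*} [Field K] {n : ℕ}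

/-- Strictly upper triangular predicate. -/
def IsSU {n : ℕ} {K : Type*} [Field K] (M : Matrix (Fin n) (Fin n) K) : Prop :=
  ∀ i j : Fin n, j ≤ i → M i j = 0

lemma mem_strictUpper_iff {M : Matrix (Fin n) (Fin n) K} :
    M ∈ strictUpper n K ↔ IsSU M := Iff.rfl

lemma IsSU.add' {A B : Matrix (Fin n) (Fin n) K} (hA : IsSU A) (hB : IsSU B) :
    IsSU (A + B) := fun i j h => by simp [Matrix.add_apply, hA i j h, hB i j h]

lemma IsSU.smul' {A : Matrix (Fin n) (Fin n) K} (a : K) (hA : IsSU A) :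
    IsSU (a • A) := fun i j h => by simp [Matrix.smul_apply, hA i j h]

/-- Matrix entry with natural-number indices (zero outside the range). -/
def entry {n : ℕ} {K : Type*} [Field K] (M : Matrix (Fin n) (Fin n) K) (i k : ℕ) : K :=
  if h : i < n ∧ k < n then M ⟨i, h.1⟩ ⟨k, h.2⟩ else 0

lemma entry_add (M N : Matrix (Fin n) (Fin n) K) (i k : ℕ) :
    entry (M + N) i k = entry M i k + entry N i k := by
  unfold entry; split <;> simp [Matrix.add_apply]

lemma entry_smul (a : K) (M : Matrix (Fin n) (Fin n) K) (i k : ℕ) :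
    entry (a • M) i k = a * entry M i k := by
  unfold entry; split <;> simp [Matrix.smul_apply]

lemma entry_eq (M : Matrix (Fin n) (Fin n) K) {i k : ℕ} (hi : i < n) (hk : k < n) :
    entry M i k = M ⟨i, hi⟩ ⟨k, hk⟩ := dif_pos ⟨hi, hk⟩

lemma natN_coe {i k : ℕ} (h1 : i < k) (h2 : k < n) :
    ((natN n K i k h1 h2 : strictUpper n K) : Matrix (Fin n) (Fin n) K)
      = Matrix.single ⟨i, h1.trans h2⟩ ⟨k, h2⟩ 1 := rfl

lemma natN_isSU {i k : ℕ} (h1 : i < k) (h2 : k < n) :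
    IsSU ((natN n K i k h1 h2 : strictUpper n K) : Matrix (Fin n) (Fin n) K) :=
  (natN n K i k h1 h2).2

lemma entry_natN {i k a b : ℕ} (h1 : i < k) (h2 : k < n) (ha : a < n) (hb : b < n) :
    entry ((natN n K i k h1 h2 : strictUpper n K) : Matrix (Fin n) (Fin n) K) a b
      = if i = a ∧ k = b then 1 else 0 := by
  rw [entry_eq _ ha hb, natN_coe]
  simp [Matrix.single, Fin.ext_iff]

lemma mul_low {A B : Matrix (Fin n) (Fin n) K} (hA : IsSU A) (hB : IsSU B)
    {a b : Fin n} (h : (b : ℕ) ≤ (a : ℕ) + 1) : (A * B) a b = 0 := by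
  rw [Matrix.mul_apply]
  refine Finset.sum_eq_zero fun s _ => ?_
  rcases le_or_gt s a with hs | hs
  · rw [hA a s hs, zero_mul]
  · have hbs : b ≤ s := by
      rw [Fin.le_def]; rw [Fin.lt_def] at hs; omega
    rw [hB s b hbs, mul_zero]

lemma entry_lie_succ {A B : Matrix (Fin n) (Fin n) K} (hA : IsSU A) (hB : IsSU B)
    (j k : ℕ) (hk : k ≤ j + 1) : entry ⁅A, B⁆ j k = 0 := by
  unfold entry; split
  · rw [Ring.lie_def, Matrix.sub_apply, mul_low hA hB (by exact hk),
      mul_low hB hA (by exact hk), sub_zero]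
  · rfl

/-- The diagonal matrix whose bracket realizes the diagonal part. -/
def dg (n : ℕ) {K : Type*} [Field K] (lam : ℕ → K) : Matrix (Fin n) (Fin n) K :=
  Matrix.diagonal fun i => -∑ p ∈ Finset.range (i : ℕ), lam p

lemma lie_dg_apply (lam : ℕ → K) (A : Matrix (Fin n) (Fin n) K) (a b : Fin n) :
    ⁅dg n lam, A⁆ a b
      = ((∑ p ∈ Finset.range (b : ℕ), lam p) - ∑ p ∈ Finset.range (a : ℕ), lam p) * A a b := by
  simp only [dg, Ring.lie_def, Matrix.sub_apply, Matrix.diagonal_mul, Matrix.mul_diagonal]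
  ring

lemma isSU_lie_dg (lam : ℕ → K) {A : Matrix (Fin n) (Fin n) K} (hA : IsSU A) :
    IsSU ⁅dg n lam, A⁆ := fun i j h => by rw [lie_dg_apply, hA i j h, mul_zero]

lemma lie_dg_natN (lam : ℕ → K) {i k : ℕ} (h1 : i < k) (h2 : k < n) :
    ⁅dg n lam, ((natN n K i k h1 h2 : strictUpper n K) : Matrix (Fin n) (Fin n) K)⁆
      = (∑ p ∈ Finset.Ico i k, lam p)
          • ((natN n K i k h1 h2 : strictUpper n K) : Matrix (Fin n) (Fin n) K) := by
  ext a b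
  rw [lie_dg_apply, Matrix.smul_apply, natN_coe]
  rcases em ((⟨i, h1.trans h2⟩ : Fin n) = a ∧ (⟨k, h2⟩ : Fin n) = b) with h | h
  · obtain ⟨rfl, rfl⟩ := h
    rw [Matrix.single_apply_same, smul_eq_mul, mul_one, mul_one,
      Finset.sum_Ico_eq_sub _ h1.le]
  · rw [Matrix.single_apply_of_ne _ _ _ _ _ h, mul_zero, smul_zero]


/-- Corner basis matrices. -/
def e1M (K : Type*) [Field K] {n : ℕ} (hn : 4 ≤ n) : Matrix (Fin n) (Fin n) K :=
  ((natN n K 1 (n - 1) (by have := hn; omega) (by have := hn; omega) : strictUpper n K) : Matrix (Fin n) (Fin n) K)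

def e2M (K : Type*) [Field K] {n : ℕ} (hn : 4 ≤ n) : Matrix (Fin n) (Fin n) K :=
  ((natN n K 0 (n - 1) (by have := hn; omega) (by have := hn; omega) : strictUpper n K) : Matrix (Fin n) (Fin n) K)

def e3M (K : Type*) [Field K] {n : ℕ} (hn : 4 ≤ n) : Matrix (Fin n) (Fin n) K :=
  ((natN n K 0 (n - 2) (by have := hn; omega) (by have := hn; omega) : strictUpper n K) : Matrix (Fin n) (Fin n) K)

lemma e1M_isSU (hn : 4 ≤ n) : IsSU (e1M K hn) := natN_isSU _ _
lemma e2M_isSU (hn : 4 ≤ n) : IsSU (e2M K hn) := natN_isSU _ _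
lemma e3M_isSU (hn : 4 ≤ n) : IsSU (e3M K hn) := natN_isSU _ _

lemma std_mul_apply (i j : Fin n) (M : Matrix (Fin n) (Fin n) K) (a b : Fin n) :
    (Matrix.single i j (1 : K) * M) a b = if a = i then M j b else 0 := by
  by_cases h : a = i
  · subst h; rw [Matrix.single_mul_apply_same, one_mul, if_pos rfl]
  · rw [Matrix.single_mul_apply_of_ne _ _ _ _ _ h, if_neg h]

lemma mul_std_apply (i j : Fin n) (M : Matrix (Fin n) (Fin n) K) (a b : Fin n) :
    (M * Matrix.single i j (1 : K)) a b = if b = j then M a i else 0 := by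
  by_cases h : b = j
  · subst h; rw [Matrix.mul_single_apply_same, mul_one, if_pos rfl]
  · rw [Matrix.mul_single_apply_of_ne _ _ _ _ _ h, if_neg h]

lemma lie_e1 (hn : 4 ≤ n) {Y : Matrix (Fin n) (Fin n) K} (hY : IsSU Y) :
    ⁅Y, e1M K hn⁆ = entry Y 0 1 • e2M K hn := by
  unfold e1M e2M
  have hlast : ∀ b : Fin n, Y ⟨n - 1, by omega⟩ b = 0 := fun b =>
    hY _ _ (by rw [Fin.le_def]; exact Nat.le_pred_of_lt b.isLt)
  have hcol1 : ∀ a : Fin n, a ≠ (⟨0, by omega⟩ : Fin n) → Y a ⟨1, by omega⟩ = 0 := fun a ha =>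
    hY _ _ (by
      have h0 : (a : ℕ) ≠ 0 := fun h => ha (Fin.ext h)
      rw [Fin.le_def]; show 1 ≤ (a : ℕ); omega)
  rw [natN_coe, natN_coe]
  ext a b
  rw [Ring.lie_def, Matrix.sub_apply, mul_std_apply, std_mul_apply, Matrix.smul_apply,
    entry_eq Y (show 0 < n by omega) (show 1 < n by omega), smul_eq_mul]
  by_cases hb : b = (⟨n - 1, by omega⟩ : Fin n)
  · subst hb
    rw [if_pos rfl]
    by_cases ha : a = (⟨0, by omega⟩ : Fin n)
    · subst ha
      rw [if_neg (show ¬((⟨0, show (0:ℕ) < n by omega⟩ : Fin n) = ⟨1, show (1:ℕ) < n by omega⟩)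
          by simp [Fin.ext_iff]), Matrix.single_apply_same, mul_one, sub_zero]
    · rw [hcol1 a ha, Matrix.single_apply_of_ne _ _ _ _ _ (fun hc => ha hc.1.symm),
        mul_zero]
      split
      · simp [hlast]
      · ring
  · rw [if_neg hb, Matrix.single_apply_of_ne _ _ _ _ _ (fun hc => hb hc.2.symm), mul_zero]
    split
    · simp [hlast]
    · ring

lemma lie_e2 (hn : 4 ≤ n) {Y : Matrix (Fin n) (Fin n) K} (hY : IsSU Y) :
    ⁅Y, e2M K hn⁆ = 0 := by
  unfold e2M
  have hlast : ∀ b : Fin n, Y ⟨n - 1, by omega⟩ b = 0 := fun b =>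
    hY _ _ (by rw [Fin.le_def]; exact Nat.le_pred_of_lt b.isLt)
  have hcol0 : ∀ a : Fin n, Y a ⟨0, by omega⟩ = 0 := fun a =>
    hY _ _ (by rw [Fin.le_def]; exact Nat.zero_le _)
  rw [natN_coe]
  ext a b
  rw [Ring.lie_def, Matrix.sub_apply, mul_std_apply, std_mul_apply, Matrix.zero_apply]
  split
  · rw [hcol0]
    split
    · simp [hlast]
    · ring
  · split
    · simp [hlast]
    · ring

lemma lie_e3 (hn : 4 ≤ n) {Y : Matrix (Fin n) (Fin n) K} (hY : IsSU Y) :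
    ⁅Y, e3M K hn⁆ = -(entry Y (n - 2) (n - 1)) • e2M K hn := by
  unfold e3M e2M
  have hcol0 : ∀ a : Fin n, Y a ⟨0, by omega⟩ = 0 := fun a =>
    hY _ _ (by rw [Fin.le_def]; exact Nat.zero_le _)
  have hrow : ∀ b : Fin n, b ≠ (⟨n - 1, by omega⟩ : Fin n) → Y ⟨n - 2, by omega⟩ b = 0 :=
    fun b hb => hY _ _ (by
      have h0 : (b : ℕ) ≠ n - 1 := fun h => hb (Fin.ext h)
      rw [Fin.le_def]; show (b : ℕ) ≤ n - 2; have := b.isLt; omega)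
  rw [natN_coe, natN_coe]
  ext a b
  rw [Ring.lie_def, Matrix.sub_apply, mul_std_apply, std_mul_apply, Matrix.smul_apply,
    entry_eq Y (show n - 2 < n by omega) (show n - 1 < n by omega), smul_eq_mul]
  by_cases ha : a = (⟨0, by omega⟩ : Fin n)
  · subst ha
    rw [if_pos rfl]
    by_cases hb : b = (⟨n - 1, by omega⟩ : Fin n)
    · subst hb
      rw [Matrix.single_apply_same, mul_one]
      split
      · simp [hcol0]
      · ring
    · rw [hrow b hb, Matrix.single_apply_of_ne _ _ _ _ _ (fun hc => hb hc.2.symm),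
        mul_zero]
      split
      · simp [hcol0]
      · ring
  · rw [if_neg ha, Matrix.single_apply_of_ne _ _ _ _ _ (fun hc => ha hc.1.symm),
      mul_zero]
    split
    · simp [hcol0]
    · ring

/-- The candidate derivation, at the matrix level. -/
def Dmat (hn : 4 ≤ n) (lam c : ℕ → K) (A : Matrix (Fin n) (Fin n) K) :
    Matrix (Fin n) (Fin n) K :=
  ⁅dg n lam, A⁆
    + (c 0 * entry A 0 1) • e1M K hn
    + (∑ j ∈ Finset.Ico 1 (n - 2), c j * entry A j (j + 1)) • e2M K hn
    + (c (n - 2) * entry A (n - 2) (n - 1)) • e3M K hn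

lemma Dmat_isSU (hn : 4 ≤ n) (lam c : ℕ → K) {A : Matrix (Fin n) (Fin n) K} (hA : IsSU A) :
    IsSU (Dmat hn lam c A) :=
  ((((isSU_lie_dg lam hA).add' ((e1M_isSU hn).smul' _)).add'
    ((e2M_isSU hn).smul' _)).add' ((e3M_isSU hn).smul' _))

lemma Dmat_add (hn : 4 ≤ n) (lam c : ℕ → K) (A B : Matrix (Fin n) (Fin n) K) :
    Dmat hn lam c (A + B) = Dmat hn lam c A + Dmat hn lam c B := by
  simp only [Dmat, lie_add, entry_add, mul_add, add_smul, Finset.sum_add_distrib]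
  abel

lemma Dmat_smul (hn : 4 ≤ n) (lam c : ℕ → K) (a : K) (A : Matrix (Fin n) (Fin n) K) :
    Dmat hn lam c (a • A) = a • Dmat hn lam c A := by
  have hsum : (∑ j ∈ Finset.Ico 1 (n - 2), c j * entry (a • A) j (j + 1))
      = a * ∑ j ∈ Finset.Ico 1 (n - 2), c j * entry A j (j + 1) := by
    rw [Finset.mul_sum]
    exact Finset.sum_congr rfl fun j _ => by rw [entry_smul]; ring
  have t1 : ⁅dg n lam, a • A⁆ = a • ⁅dg n lam, A⁆ := by
    rw [Ring.lie_def, Ring.lie_def, Matrix.mul_smul, Matrix.smul_mul, smul_sub]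
  have t2 : (∑ x ∈ Finset.Ico 1 (n - 2), c x * (a * entry A x (x + 1)))
      = a * ∑ j ∈ Finset.Ico 1 (n - 2), c j * entry A j (j + 1) := by
    rw [Finset.mul_sum]; exact Finset.sum_congr rfl fun j _ => by ring
  simp only [Dmat, t1, entry_smul, smul_add, smul_smul,
    mul_left_comm (c 0), mul_left_comm (c (n - 2))]
  rw [t2]

lemma Dmat_leibniz (hn : 4 ≤ n) (lam c : ℕ → K) {A B : Matrix (Fin n) (Fin n) K}
    (hA : IsSU A) (hB : IsSU B) :
    Dmat hn lam c ⁅A, B⁆ = ⁅A, Dmat hn lam c B⁆ - ⁅B, Dmat hn lam c A⁆ := by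
  have h01 : entry ⁅A, B⁆ 0 1 = 0 := entry_lie_succ hA hB 0 1 (by omega)
  have hlastd : entry ⁅A, B⁆ (n - 2) (n - 1) = 0 :=
    entry_lie_succ hA hB (n - 2) (n - 1) (by omega)
  have hsum : (∑ j ∈ Finset.Ico 1 (n - 2), c j * entry ⁅A, B⁆ j (j + 1)) = 0 :=
    Finset.sum_eq_zero fun j _ => by
      rw [entry_lie_succ hA hB j (j + 1) le_rfl, mul_zero]
  have jac : ⁅A, ⁅dg n lam, B⁆⁆ = ⁅dg n lam, ⁅A, B⁆⁆ + ⁅B, ⁅dg n lam, A⁆⁆ := by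
    have h := leibniz_lie (dg n lam) A B
    have h2 : ⁅⁅dg n lam, A⁆, B⁆ = -⁅B, ⁅dg n lam, A⁆⁆ := (lie_skew _ _).symm
    have h3 : ⁅dg n lam, ⁅A, B⁆⁆ + ⁅B, ⁅dg n lam, A⁆⁆ = ⁅A, ⁅dg n lam, B⁆⁆ := by
      rw [h, h2]; abel
    exact h3.symm
  have lsm : ∀ (t : K) (X Y : Matrix (Fin n) (Fin n) K), ⁅X, t • Y⁆ = t • ⁅X, Y⁆ :=
    fun t X Y => by rw [Ring.lie_def, Ring.lie_def, Matrix.mul_smul, Matrix.smul_mul, smul_sub]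
  simp only [Dmat, h01, hlastd, hsum, mul_zero, zero_smul, add_zero, lie_add, lsm,
    lie_e1 hn hA, lie_e1 hn hB, lie_e2 hn hA, lie_e2 hn hB, lie_e3 hn hA, lie_e3 hn hB,
    smul_zero, jac]
  module

/-- The candidate derivation, as a `LieDerivation` on `strictUpper n K`. -/
def Dder (hn : 4 ≤ n) (lam c : ℕ → K) :
    LieDerivation K (strictUpper n K) (strictUpper n K) where
  toFun X := ⟨Dmat hn lam c ↑X, Dmat_isSU hn lam c X.2⟩
  map_add' X Y := Subtype.ext (Dmat_add hn lam c ↑X ↑Y)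
  map_smul' a X := Subtype.ext (Dmat_smul hn lam c a ↑X)
  leibniz' X Y := Subtype.ext (Dmat_leibniz hn lam c X.2 Y.2)

lemma Dder_apply (hn : 4 ≤ n) (lam c : ℕ → K) (X : strictUpper n K) :
    ((Dder hn lam c X : strictUpper n K) : Matrix (Fin n) (Fin n) K) = Dmat hn lam c ↑X := rfl

end CanonAux

/-- Converse to the canonical form: every choice of diagonal parameters $λ$ and
off-diagonal parameters $c$ yields a derivation of $T(n)$ with the prescribed values on
the standard basis. (Indices are $0$-based.) -/
theorem canonical_form_is_derivation
    (K : Type*) [Field K] [CharZero K] (n : ℕ) (hn : 4 ≤ n)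
    (lam c : ℕ → K) :
    ∃ D : LieDerivation K (strictUpper n K) (strictUpper n K),
      (D (natN n K 0 1 (by omega) (by omega)) =
        lam 0 • natN n K 0 1 (by omega) (by omega) +
          c 0 • natN n K 1 (n - 1) (by omega) (by omega)) ∧
      (∀ (j : ℕ) (hj1 : 1 ≤ j) (hj2 : j ≤ n - 3),
        D (natN n K j (j + 1) (by omega) (by omega)) =
          lam j • natN n K j (j + 1) (by omega) (by omega) +
            c j • natN n K 0 (n - 1) (by omega) (by omega)) ∧
      (D (natN n K (n - 2) (n - 1) (by omega) (by omega)) =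
        lam (n - 2) • natN n K (n - 2) (n - 1) (by omega) (by omega) +
          c (n - 2) • natN n K 0 (n - 2) (by omega) (by omega)) ∧
      (∀ (i k : ℕ) (hik : i + 2 ≤ k) (hk : k < n),
        D (natN n K i k (by omega) hk) =
          (∑ p ∈ Finset.Ico i k, lam p) • natN n K i k (by omega) hk) := by
  refine ⟨Dder hn lam c, ?_, ?_, ?_, ?_⟩
  · -- N_{01}
    apply Subtype.ext
    rw [Dder_apply]
    show Dmat hn lam c
        ((natN n K 0 1 (by omega) (by omega) : strictUpper n K) : Matrix (Fin n) (Fin n) K)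
      = lam 0 • ((natN n K 0 1 (by omega) (by omega) : strictUpper n K) : Matrix (Fin n) (Fin n) K)
        + c 0 • e1M K hn
    have h1 : entry ((natN n K 0 1 (by omega) (by omega) : strictUpper n K) :
        Matrix (Fin n) (Fin n) K) 0 1 = 1 := by
      rw [entry_natN _ _ (by omega) (by omega), if_pos ⟨rfl, rfl⟩]
    have hs : (∑ j ∈ Finset.Ico 1 (n - 2), c j * entry ((natN n K 0 1 (by omega) (by omega) :
        strictUpper n K) : Matrix (Fin n) (Fin n) K) j (j + 1)) = 0 :=
      Finset.sum_eq_zero fun j hj => by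
        obtain ⟨a1, a2⟩ := Finset.mem_Ico.mp hj
        rw [entry_natN _ _ (by omega) (by omega), if_neg (by omega), mul_zero]
    have h3 : entry ((natN n K 0 1 (by omega) (by omega) : strictUpper n K) :
        Matrix (Fin n) (Fin n) K) (n - 2) (n - 1) = 0 := by
      rw [entry_natN _ _ (by omega) (by omega), if_neg (by omega)]
    have hIco : (∑ p ∈ Finset.Ico 0 1, lam p) = lam 0 := by
      rw [← Finset.range_eq_Ico]; simp
    simp only [Dmat, lie_dg_natN, h1, hs, h3, hIco, mul_one, mul_zero, zero_smul, add_zero]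
  · -- middle N_{j,j+1}
    intro j hj1 hj2
    apply Subtype.ext
    rw [Dder_apply]
    show Dmat hn lam c ((natN n K j (j + 1) (by omega) (by omega) : strictUpper n K) :
        Matrix (Fin n) (Fin n) K)
      = lam j • ((natN n K j (j + 1) (by omega) (by omega) : strictUpper n K) :
          Matrix (Fin n) (Fin n) K)
        + c j • e2M K hn
    have h1 : entry ((natN n K j (j + 1) (by omega) (by omega) : strictUpper n K) :
        Matrix (Fin n) (Fin n) K) 0 1 = 0 := by
      rw [entry_natN _ _ (by omega) (by omega), if_neg (by omega)]
    have hs : (∑ j' ∈ Finset.Ico 1 (n - 2), c j' *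
        entry ((natN n K j (j + 1) (by omega) (by omega) : strictUpper n K) :
          Matrix (Fin n) (Fin n) K) j' (j' + 1)) = c j := by
      rw [Finset.sum_eq_single_of_mem j (Finset.mem_Ico.mpr ⟨hj1, by omega⟩)]
      · rw [entry_natN _ _ (by omega) (by omega), if_pos ⟨rfl, rfl⟩, mul_one]
      · intro j' hj' hne
        obtain ⟨a1, a2⟩ := Finset.mem_Ico.mp hj'
        rw [entry_natN _ _ (by omega) (by omega), if_neg (fun hc => hne hc.1.symm), mul_zero]
    have h3 : entry ((natN n K j (j + 1) (by omega) (by omega) : strictUpper n K) :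
        Matrix (Fin n) (Fin n) K) (n - 2) (n - 1) = 0 := by
      rw [entry_natN _ _ (by omega) (by omega), if_neg (by omega)]
    have hIco : (∑ p ∈ Finset.Ico j (j + 1), lam p) = lam j := by
      rw [Finset.sum_Ico_eq_sum_range]; simp
    simp only [Dmat, lie_dg_natN, h1, hs, h3, hIco, mul_zero, zero_smul, add_zero, zero_add]
  · -- N_{n-2, n-1}
    apply Subtype.ext
    rw [Dder_apply]
    show Dmat hn lam c ((natN n K (n - 2) (n - 1) (by omega) (by omega) : strictUpper n K) :
        Matrix (Fin n) (Fin n) K)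
      = lam (n - 2) • ((natN n K (n - 2) (n - 1) (by omega) (by omega) : strictUpper n K) :
          Matrix (Fin n) (Fin n) K)
        + c (n - 2) • e3M K hn
    have h1 : entry ((natN n K (n - 2) (n - 1) (by omega) (by omega) : strictUpper n K) :
        Matrix (Fin n) (Fin n) K) 0 1 = 0 := by
      rw [entry_natN _ _ (by omega) (by omega), if_neg (by omega)]
    have hs : (∑ j' ∈ Finset.Ico 1 (n - 2), c j' *
        entry ((natN n K (n - 2) (n - 1) (by omega) (by omega) : strictUpper n K) :
          Matrix (Fin n) (Fin n) K) j' (j' + 1)) = 0 :=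
      Finset.sum_eq_zero fun j' hj' => by
        obtain ⟨a1, a2⟩ := Finset.mem_Ico.mp hj'
        rw [entry_natN _ _ (by omega) (by omega), if_neg (by omega), mul_zero]
    have h3 : entry ((natN n K (n - 2) (n - 1) (by omega) (by omega) : strictUpper n K) :
        Matrix (Fin n) (Fin n) K) (n - 2) (n - 1) = 1 := by
      rw [entry_natN _ _ (by omega) (by omega), if_pos ⟨rfl, rfl⟩]
    have hIco : (∑ p ∈ Finset.Ico (n - 2) (n - 1), lam p) = lam (n - 2) := by
      rw [show n - 1 = (n - 2) + 1 by omega, Finset.sum_Ico_eq_sum_range]; simp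
    simp only [Dmat, lie_dg_natN, h1, hs, h3, hIco, mul_one, mul_zero, zero_smul, add_zero,
      zero_add]
  · -- N_{ik} with k - i ≥ 2
    intro i k hik hk
    apply Subtype.ext
    rw [Dder_apply]
    show Dmat hn lam c ((natN n K i k (by omega) hk : strictUpper n K) :
        Matrix (Fin n) (Fin n) K)
      = (∑ p ∈ Finset.Ico i k, lam p) •
        ((natN n K i k (by omega) hk : strictUpper n K) : Matrix (Fin n) (Fin n) K)
    have h1 : entry ((natN n K i k (by omega) hk : strictUpper n K) :
        Matrix (Fin n) (Fin n) K) 0 1 = 0 := by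
      rw [entry_natN _ _ (by omega) (by omega), if_neg (by omega)]
    have hs : (∑ j' ∈ Finset.Ico 1 (n - 2), c j' *
        entry ((natN n K i k (by omega) hk : strictUpper n K) :
          Matrix (Fin n) (Fin n) K) j' (j' + 1)) = 0 :=
      Finset.sum_eq_zero fun j' hj' => by
        obtain ⟨a1, a2⟩ := Finset.mem_Ico.mp hj'
        rw [entry_natN _ _ (by omega) (by omega), if_neg (by omega), mul_zero]
    have h3 : entry ((natN n K i k (by omega) hk : strictUpper n K) :
        Matrix (Fin n) (Fin n) K) (n - 2) (n - 1) = 0 := by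
      rw [entry_natN _ _ (by omega) (by omega), if_neg (by omega)]
    simp only [Dmat, lie_dg_natN, h1, hs, h3, mul_zero, zero_smul, add_zero]
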